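/- Let F(z) = ∑_{n≥0} c_n zⁿ be entire with |F(z)| ≤ exp(|z|²) for all z, let N ∈ ℕ, and set T_N F(z) = ∑_{0≤n≤N} c_n zⁿ. Then |F(z) − T_N F(z)| ≤ 2^{−(N−3)/2} for all |z| ≤ √(N/(4e)). -/

import Mathlib

open Real Finset

lemma cauchy_coeff_bound (F : ℂ → ℂ) (hF : Differentiable ℂ F)
    (hbd : ∀ z : ℂ, ‖F z‖ ≤ Real.exp (‖z‖ ^ 2))
    (n : ℕ) {R : ℝ} (hR : 0 < R) :
    ‖iteratedDeriv n F 0 / (Nat.factorial n : ℂ)‖ ≤ Real.exp (R ^ 2) / R ^ n := by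
  lift R to NNReal using hR.le with R'
  have hR0 : (0 : NNReal) < R' := by exact_mod_cast hR
  have h := hF.hasFPowerSeriesOnBall 0 hR0
  set p := cauchyPowerSeries F 0 (R' : ℝ) with hp
  have hderiv : iteratedDeriv n F 0 = (n.factorial : ℂ) * p n (fun _ => 1) := by
    rw [iteratedDeriv_eq_iteratedFDeriv, ← h.factorial_smul (1 : ℂ) n]
    simp [nsmul_eq_mul]
  have hne : (n.factorial : ℂ) ≠ 0 := by exact_mod_cast Nat.cast_ne_zero.mpr n.factorial_ne_zero
  have heq : iteratedDeriv n F 0 / (n.factorial : ℂ) = p n (fun _ => 1) := by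
    rw [hderiv]; field_simp
  rw [heq]
  have h1 : ‖p n fun _ => 1‖ ≤ ‖p n‖ := by
    have := (p n).le_opNorm (fun _ => (1 : ℂ))
    simpa using this
  have h2 : ‖p n‖ ≤ ((2 * π)⁻¹ * ∫ θ : ℝ in (0)..2 * π,
      ‖F (circleMap 0 (R' : ℝ) θ)‖) * |(R' : ℝ)|⁻¹ ^ n :=
    norm_cauchyPowerSeries_le F 0 (R' : ℝ) n
  have hint : (∫ θ : ℝ in (0)..2 * π, ‖F (circleMap 0 (R' : ℝ) θ)‖) ≤
      (2 * π) * Real.exp ((R' : ℝ) ^ 2) := by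
    have : (∫ θ : ℝ in (0)..2 * π, ‖F (circleMap 0 (R' : ℝ) θ)‖) ≤
        ∫ θ : ℝ in (0)..2 * π, Real.exp ((R' : ℝ) ^ 2) := by
      apply intervalIntegral.integral_mono_on Real.two_pi_pos.le
      · exact ((hF.continuous.comp (continuous_circleMap 0 _)).norm).intervalIntegrable _ _
      · exact intervalIntegrable_const
      · intro θ _
        have := hbd (circleMap 0 (R' : ℝ) θ)
        simpa [norm_circleMap_zero, abs_of_nonneg (R'.coe_nonneg)] using this
    simpa [mul_comm] using this
  calc ‖p n fun _ => 1‖ ≤ ((2 * π)⁻¹ * ∫ θ : ℝ in (0)..2 * π,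
      ‖F (circleMap 0 (R' : ℝ) θ)‖) * |(R' : ℝ)|⁻¹ ^ n := h1.trans h2
    _ ≤ ((2 * π)⁻¹ * ((2 * π) * Real.exp ((R' : ℝ) ^ 2))) * |(R' : ℝ)|⁻¹ ^ n := by
        gcongr
    _ = Real.exp ((R' : ℝ) ^ 2) / (R' : ℝ) ^ n := by
        rw [abs_of_nonneg R'.coe_nonneg]
        field_simp
        rw [← mul_pow, one_div, inv_mul_cancel₀ hR.ne', one_pow]

lemma coeff_bound (F : ℂ → ℂ) (hF : Differentiable ℂ F)
    (hbd : ∀ z : ℂ, ‖F z‖ ≤ Real.exp (‖z‖ ^ 2))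
    {n : ℕ} (hn : 1 ≤ n) :
    ‖iteratedDeriv n F 0 / (Nat.factorial n : ℂ)‖ ≤
      (2 * Real.exp 1 / n) ^ ((n : ℝ) / 2) := by
  have hn0 : (0 : ℝ) < n := by exact_mod_cast hn
  have hR : (0 : ℝ) < Real.sqrt ((n : ℝ) / 2) := Real.sqrt_pos.mpr (by positivity)
  refine (cauchy_coeff_bound F hF hbd n hR).trans_eq ?_
  rw [Real.sq_sqrt (by positivity : (0:ℝ) ≤ (n : ℝ) / 2)]
  have h1 : Real.sqrt ((n : ℝ) / 2) ^ n = ((n : ℝ) / 2) ^ ((n : ℝ) / 2) := by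
    rw [Real.sqrt_eq_rpow, ← Real.rpow_natCast (((n:ℝ)/2) ^ ((1:ℝ)/2)) n,
      ← Real.rpow_mul (by positivity)]
    ring_nf
  have h2 : Real.exp ((n : ℝ) / 2) = Real.exp 1 ^ ((n : ℝ) / 2) := by
    rw [Real.exp_one_rpow]
  rw [h1, h2, ← Real.div_rpow (Real.exp_pos 1).le (by positivity)]
  congr 1
  field_simp

set_option maxHeartbeats 1000000 in
theorem stmt_8 (F : ℂ → ℂ) (hF : Differentiable ℂ F)
    (hbd : ∀ z : ℂ, ‖F z‖ ≤ Real.exp (‖z‖ ^ 2)) (N : ℕ) (z : ℂ)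
    (hz : ‖z‖ ≤ Real.sqrt ((N : ℝ) / (4 * Real.exp 1))) :
    ‖F z - ∑ n ∈ Finset.range (N + 1), (iteratedDeriv n F 0 / (Nat.factorial n : ℂ)) * z ^ n‖
      ≤ (2 : ℝ) ^ (-(((N : ℝ) - 3) / 2)) := by
  set g : ℕ → ℂ := fun n => (iteratedDeriv n F 0 / (Nat.factorial n : ℂ)) * z ^ n with hg
  have hsum : HasSum g (F z) := by
    have h := Complex.hasSum_taylorSeries_of_entire hF 0 z
    refine h.congr_fun fun n => ?_
    simp only [hg, smul_eq_mul, sub_zero]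
    ring
  -- tail identity
  have htail : F z - ∑ n ∈ Finset.range (N + 1), g n = ∑' i, g (i + (N + 1)) := by
    have h2 := Summable.sum_add_tsum_nat_add (N + 1) hsum.summable
    rw [hsum.tsum_eq] at h2
    rw [← h2]; ring
  rw [htail]
  -- per-term bound
  set a : ℝ := (Real.sqrt 2)⁻¹ with ha
  have ha0 : 0 < a := by positivity
  have hs2 : (1:ℝ) < Real.sqrt 2 := by
    nlinarith [Real.sq_sqrt (by norm_num : (2:ℝ) ≥ 0), Real.sqrt_nonneg 2]
  have ha1 : a < 1 := by
    rw [ha, inv_lt_one_iff₀]; right; exact hs2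
  have hterm : ∀ i : ℕ, ‖g (i + (N + 1))‖ ≤ a ^ (N + 1) * a ^ i := by
    intro i
    set n := i + (N + 1) with hn
    have hn1 : 1 ≤ n := by omega
    have hn0 : (0:ℝ) < n := by exact_mod_cast hn1
    have hNn : (N : ℝ) ≤ (n : ℝ) := by exact_mod_cast Nat.le_of_lt_succ (by omega)
    have e1 : (0:ℝ) ≤ (N : ℝ) / (4 * Real.exp 1) := by positivity
    have hzn : ‖z‖ ^ n ≤ ((N : ℝ) / (4 * Real.exp 1)) ^ ((n : ℝ) / 2) := by
      calc ‖z‖ ^ n ≤ Real.sqrt ((N : ℝ) / (4 * Real.exp 1)) ^ n :=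
            pow_le_pow_left₀ (norm_nonneg z) hz n
        _ = ((N : ℝ) / (4 * Real.exp 1)) ^ ((n : ℝ) / 2) := by
            rw [Real.sqrt_eq_rpow, ← Real.rpow_natCast (((N:ℝ)/(4*Real.exp 1)) ^ ((1:ℝ)/2)) n,
              ← Real.rpow_mul e1]
            ring_nf
    have hcb := coeff_bound F hF hbd hn1
    have : ‖g n‖ ≤
        (2 * Real.exp 1 / n) ^ ((n : ℝ) / 2) * ((N : ℝ) / (4 * Real.exp 1)) ^ ((n : ℝ) / 2) := by
      rw [hg]
      simp only [norm_mul, norm_pow]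
      exact mul_le_mul hcb hzn (by positivity) (by positivity)
    have hmul : (2 * Real.exp 1 / n) ^ ((n : ℝ) / 2) * ((N : ℝ) / (4 * Real.exp 1)) ^ ((n : ℝ) / 2)
        = ((N : ℝ) / (2 * n)) ^ ((n : ℝ) / 2) := by
      rw [← Real.mul_rpow (by positivity) e1]
      congr 1
      field_simp
      ring
    have hle : ((N : ℝ) / (2 * n)) ^ ((n : ℝ) / 2) ≤ ((2:ℝ)⁻¹) ^ ((n : ℝ) / 2) := by
      apply Real.rpow_le_rpow (by positivity) _ (by positivity)
      rw [div_le_iff₀ (by positivity)]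
      nlinarith
    have haa : a = (2:ℝ) ^ (-(1/2) : ℝ) := by
      rw [ha, Real.rpow_neg (by norm_num), Real.sqrt_eq_rpow]
    have han : a ^ n = (2:ℝ) ^ (-(1/2) * (n:ℝ)) := by
      rw [haa, ← Real.rpow_natCast ((2:ℝ) ^ (-(1/2):ℝ)) n, ← Real.rpow_mul (by norm_num)]
    have hid : ((2:ℝ)⁻¹) ^ ((n : ℝ) / 2) = a ^ n := by
      rw [Real.inv_rpow (by norm_num : (0:ℝ) ≤ 2), ← Real.rpow_neg (by norm_num), han]
      congr 1
      ring
    have : ‖g n‖ ≤ a ^ n := this.trans (hmul.le.trans (hle.trans_eq hid))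
    calc ‖g n‖ ≤ a ^ n := this
      _ = a ^ (N + 1) * a ^ i := by rw [hn]; ring
  have hgeo : Summable (fun i : ℕ => a ^ (N + 1) * a ^ i) :=
    (summable_geometric_of_lt_one ha0.le ha1).mul_left _
  have hsumm : Summable (fun i : ℕ => ‖g (i + (N + 1))‖) :=
    Summable.of_nonneg_of_le (fun i => norm_nonneg _) hterm hgeo
  have h1 : ‖∑' i, g (i + (N + 1))‖ ≤ ∑' i, ‖g (i + (N + 1))‖ := by
    have hs' : Summable fun i : ℕ => ‖g (i + (N + 1))‖ := by
      exact hsumm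
    exact
      norm_tsum_le_tsum_norm (f := fun i : ℕ => g (i + (N + 1))) hs'
  have h2 : ∑' i, ‖g (i + (N + 1))‖ ≤ ∑' i : ℕ, a ^ (N + 1) * a ^ i :=
    Summable.tsum_le_tsum hterm hsumm hgeo
  have h3 : ∑' i : ℕ, a ^ (N + 1) * a ^ i = a ^ (N + 1) * (1 - a)⁻¹ := by
    rw [tsum_mul_left, tsum_geometric_of_lt_one ha0.le ha1]
  have haa : a = (2:ℝ) ^ (-(1/2) : ℝ) := by
    rw [ha, Real.rpow_neg (by norm_num), Real.sqrt_eq_rpow]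
  have hpow : a ^ (N + 1) = (2:ℝ) ^ (-(((N:ℝ) + 1) / 2)) := by
    rw [haa, ← Real.rpow_natCast ((2:ℝ) ^ (-(1/2):ℝ)) (N + 1), ← Real.rpow_mul (by norm_num)]
    congr 1
    push_cast
    ring
  have ha34 : a ≤ 3 / 4 := by
    have h16 : (4:ℝ)/3 ≤ Real.sqrt 2 := by
      nlinarith [Real.sq_sqrt (by norm_num : (0:ℝ) ≤ 2), Real.sqrt_nonneg 2]
    rw [ha]
    rw [inv_le_comm₀ (by positivity) (by norm_num)]
    linarith
  have h4 : (1 - a)⁻¹ ≤ 4 := by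
    have : (1:ℝ)/4 ≤ 1 - a := by linarith
    calc (1 - a)⁻¹ ≤ ((1:ℝ)/4)⁻¹ := by
          apply inv_anti₀ (by norm_num) this
      _ = 4 := by norm_num
  have h5 : a ^ (N + 1) * (1 - a)⁻¹ ≤ (2:ℝ) ^ (-(((N:ℝ) - 3) / 2)) := by
    have hrhs : (2:ℝ) ^ (-(((N:ℝ) - 3) / 2)) = (2:ℝ) ^ (-(((N:ℝ) + 1) / 2)) * 4 := by
      rw [show -(((N:ℝ) - 3) / 2) = -(((N:ℝ) + 1) / 2) + 2 by ring,
        Real.rpow_add (by norm_num)]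
      norm_num
    rw [hrhs, ← hpow]
    exact mul_le_mul_of_nonneg_left h4 (by positivity)
  calc ‖∑' i, g (i + (N + 1))‖ ≤ ∑' i, ‖g (i + (N + 1))‖ := h1
    _ ≤ ∑' i : ℕ, a ^ (N + 1) * a ^ i := h2
    _ = a ^ (N + 1) * (1 - a)⁻¹ := h3
    _ ≤ (2:ℝ) ^ (-(((N:ℝ) - 3) / 2)) := h5
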